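/- Let α ∈ (0,1] and let (ξ_k)_{k≥0} be a sequence of positive real numbers satisfying ξ_k − ξ_{k+1} ≥ ξ_{k+1}^{1+α} for all k ≥ 0. Then ξ_k ≤ ξ_0 / (1 + (αk/(1+α))·log(1 + ξ_0^α))^{1/α} for all k ≥ 0, and ξ_k ≤ ((1 + 1/α)(1 + ξ_0^α)/k)^{1/α} for all k ≥ 1. -/

import Mathlib

lemma lemK (α s : ℝ) (hα : 0 < α) (hs : 0 ≤ s) :
    (Real.exp s - 1) * (1 + α * s) + 1 ≤ Real.exp ((1 + α) * s) := by
  have h1 : Real.exp ((1 + α) * s) = Real.exp s * Real.exp (α * s) := by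
    rw [← Real.exp_add]; ring_nf
  have h2 : α * s + 1 ≤ Real.exp (α * s) := Real.add_one_le_exp _
  have h3 : (1:ℝ) ≤ Real.exp s := Real.one_le_exp hs
  nlinarith [mul_nonneg hα.le hs, Real.exp_pos s]

lemma chord {s s₀ : ℝ} (hs : 0 < s) (hss : s ≤ s₀) :
    s₀ * (Real.exp s - 1) ≤ s * (Real.exp s₀ - 1) := by
  have hs₀ : 0 < s₀ := lt_of_lt_of_le hs hss
  have ha : (0:ℝ) ≤ 1 - s / s₀ := by
    rw [sub_nonneg, div_le_one hs₀]; exact hss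
  have hb : (0:ℝ) ≤ s / s₀ := by positivity
  have hsum : (1 - s / s₀) + s / s₀ = 1 := by ring
  have hcv := convexOn_exp.2 (Set.mem_univ (0:ℝ)) (Set.mem_univ s₀) ha hb hsum
  simp only [smul_eq_mul, mul_zero, zero_add, Real.exp_zero, mul_one] at hcv
  have hst : s / s₀ * s₀ = s := by field_simp
  rw [hst] at hcv
  have h2 : s₀ * Real.exp s ≤ s₀ * ((1 - s / s₀) + s / s₀ * Real.exp s₀) :=
    mul_le_mul_of_nonneg_left hcv hs₀.le
  have h3 : s₀ * ((1 - s / s₀) + s / s₀ * Real.exp s₀) = s₀ - s + s * Real.exp s₀ := by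
    field_simp
  nlinarith

lemma lemC (α t A : ℝ) (hα : 0 < α) (ht : 0 < t) (hA : 1 ≤ A) :
    Real.exp (Real.log (1 + t) / ((1 + α) * A)) ≤
      1 + t / (A + α * Real.log (1 + t) / (1 + α)) := by
  set L := Real.log (1 + t) with hLdef
  have hL : 0 < L := Real.log_pos (by linarith)
  have h1α : (0:ℝ) < 1 + α := by linarith
  have hA0 : (0:ℝ) < A := by linarith
  set s := L / ((1 + α) * A) with hsdef
  set s₀ := L / (1 + α) with hs₀def
  have hs : 0 < s := by positivity
  have hss : s ≤ s₀ := by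
    rw [hsdef, hs₀def, div_le_div_iff₀ (by positivity) h1α]
    nlinarith [mul_le_mul_of_nonneg_left hA (mul_pos hL h1α).le]
  have hs₀ : 0 < s₀ := lt_of_lt_of_le hs hss
  have hexpL : Real.exp L = 1 + t := Real.exp_log (by linarith)
  have hLs₀ : (1 + α) * s₀ = L := by rw [hs₀def]; field_simp
  have hAeq : A = s₀ / s := by
    rw [hs₀def, hsdef]; field_simp
  have hmain : (Real.exp s - 1) * (A + α * L / (1 + α)) ≤ t := by
    have hch := chord hs hss
    have hc1 : (Real.exp s - 1) * A ≤ Real.exp s₀ - 1 := by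
      rw [hAeq, mul_comm, div_mul_eq_mul_div, div_le_iff₀ hs]
      nlinarith
    have hc2 : (Real.exp s - 1) * (α * L / (1 + α)) ≤ (Real.exp s₀ - 1) * (α * s₀) := by
      have he1 : Real.exp s - 1 ≤ Real.exp s₀ - 1 := by
        have := Real.exp_le_exp.mpr hss; linarith
      have he0 : (0:ℝ) ≤ Real.exp s - 1 := by
        have := Real.one_le_exp hs.le; linarith
      have heq : α * L / (1 + α) = α * s₀ := by rw [hs₀def]; ring
      rw [heq]
      exact mul_le_mul he1 le_rfl (by positivity) (by nlinarith [Real.one_le_exp hs₀.le])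
    have hK := lemK α s₀ hα hs₀.le
    have hsub : Real.exp ((1 + α) * s₀) = 1 + t := by rw [hLs₀, hexpL]
    nlinarith
  have hden : 0 < A + α * L / (1 + α) := by positivity
  have hfin : Real.exp s - 1 ≤ t / (A + α * L / (1 + α)) := by
    rw [le_div_iff₀ hden]; linarith
  linarith

theorem stmt4 (α : ℝ) (hα : α ∈ Set.Ioc (0 : ℝ) 1)
    (ξ : ℕ → ℝ) (hpos : ∀ k, 0 < ξ k)
    (hrec : ∀ k : ℕ, ξ k - ξ (k + 1) ≥ ξ (k + 1) ^ (1 + α)) :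
    (∀ k : ℕ, ξ k ≤ ξ 0 / (1 + α * k / (1 + α) * Real.log (1 + ξ 0 ^ α)) ^ (1 / α)) ∧
    (∀ k : ℕ, 1 ≤ k → ξ k ≤ ((1 + 1 / α) * (1 + ξ 0 ^ α) / k) ^ (1 / α)) := by
  obtain ⟨hα0, hα1⟩ := hα
  set t := ξ 0 ^ α with htdef
  have ht : 0 < t := Real.rpow_pos_of_pos (hpos 0) α
  set L := Real.log (1 + t) with hLdef
  have hL : 0 < L := Real.log_pos (by linarith)
  have h1α : (0:ℝ) < 1 + α := by linarith
  set c := α * L / (1 + α) with hcdef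
  have hc : 0 < c := by positivity
  have key : ∀ k : ℕ, ξ k ^ α * (1 + c * k) ≤ t := by
    intro k
    induction k with
    | zero => simp [htdef]
    | succ k ih =>
      set x := ξ (k + 1) with hxdef
      have hx : 0 < x := hpos (k + 1)
      set A := 1 + c * (k : ℝ) with hAdef
      have hA : (1:ℝ) ≤ A := by
        have hk0 : (0:ℝ) ≤ (k:ℝ) := Nat.cast_nonneg k
        nlinarith
      have hA0 : (0:ℝ) < A := by linarith
      have h1 : x * (1 + x ^ α) ≤ ξ k := by
        have hr := hrec k
        have hxa : x ^ (1 + α) = x * x ^ α := by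
          rw [Real.rpow_add hx, Real.rpow_one]
        nlinarith [hr, hxa]
      have hy : 0 < x ^ α := Real.rpow_pos_of_pos hx α
      have h2 : x ^ α * (1 + x ^ α) ^ α ≤ ξ k ^ α := by
        have := Real.rpow_le_rpow (by positivity) h1 hα0.le
        rwa [Real.mul_rpow hx.le (by positivity)] at this
      have h3 : ξ k ^ α ≤ t / A := by
        rw [le_div_iff₀ hA0]; exact ih
      set y := x ^ α with hydef
      set w := t / (A + c) with hwdef
      have hAc : (0:ℝ) < A + c := by linarith
      have hw : 0 < w := by positivity
      have h4 : t / A ≤ w * (1 + w) ^ α := by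
        have hC := lemC α t A hα0 ht hA
        rw [← hLdef, ← hcdef, ← hwdef] at hC
        have h5 : Real.exp (L / ((1 + α) * A)) ^ α ≤ (1 + w) ^ α :=
          Real.rpow_le_rpow (Real.exp_pos _).le hC hα0.le
        have h6 : Real.exp (L / ((1 + α) * A)) ^ α = Real.exp (c / A) := by
          rw [← Real.exp_mul]
          congr 1
          rw [hcdef]; field_simp
        have h7 : 1 + c / A ≤ (1 + w) ^ α := by
          have := Real.add_one_le_exp (c / A)
          rw [h6] at h5; linarith
        have h8 : w * (1 + c / A) ≤ w * (1 + w) ^ α :=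
          mul_le_mul_of_nonneg_left h7 hw.le
        have h9 : w * (1 + c / A) = t / A := by
          rw [hwdef]; field_simp
        linarith
      have h5 : y ≤ w := by
        by_contra hcon
        push_neg at hcon
        have hlt : w * (1 + w) ^ α < y * (1 + y) ^ α := by
          have hb : (1 + w) ^ α < (1 + y) ^ α :=
            Real.rpow_lt_rpow (by linarith) (by linarith) hα0
          have hbp : (0:ℝ) < (1 + w) ^ α := Real.rpow_pos_of_pos (by linarith) α
          nlinarith
        nlinarith
      have h6 : y * (A + c) ≤ t := by
        rw [hwdef, le_div_iff₀ hAc] at h5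
        exact h5
      have h7 : 1 + c * ((k : ℝ) + 1) = A + c := by rw [hAdef]; ring
      push_cast
      rw [h7]
      exact h6
  have hα' : α ≠ 0 := hα0.ne'
  constructor
  · intro k
    have hk := key k
    have hD : (0:ℝ) < 1 + c * k := by
      nlinarith [mul_nonneg hc.le (Nat.cast_nonneg k : (0:ℝ) ≤ (k:ℝ))]
    have h1 : ξ k ^ α ≤ t / (1 + c * k) := by rw [le_div_iff₀ hD]; exact hk
    have h2 : (ξ k ^ α) ^ (α⁻¹) ≤ (t / (1 + c * k)) ^ (α⁻¹) :=
      Real.rpow_le_rpow (Real.rpow_pos_of_pos (hpos k) α).le h1 (inv_nonneg.mpr hα0.le)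
    rw [Real.rpow_rpow_inv (hpos k).le hα'] at h2
    rw [htdef, Real.div_rpow (by positivity) hD.le,
      Real.rpow_rpow_inv (hpos 0).le hα'] at h2
    have heq : 1 + α * (k:ℝ) / (1 + α) * L = 1 + c * k := by
      rw [hcdef]; ring
    rw [heq, one_div]
    exact h2
  · intro k hk1
    have hk := key k
    have hkR : (1:ℝ) ≤ (k:ℝ) := by exact_mod_cast hk1
    have hk0 : (0:ℝ) < (k:ℝ) := by linarith
    have hyk : 0 < ξ k ^ α := Real.rpow_pos_of_pos (hpos k) α
    have h1 : ξ k ^ α * (c * k) ≤ t := by nlinarith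
    have hlog : t ≤ (1 + t) * L := by
      have hlog1 := Real.log_le_sub_one_of_pos (show (0:ℝ) < (1+t)⁻¹ by positivity)
      rw [Real.log_inv, ← hLdef] at hlog1
      have h3 : ((1:ℝ) - (1+t)⁻¹) * (1 + t) = t := by field_simp; ring
      nlinarith [mul_le_mul_of_nonneg_right
        (show (1:ℝ) - (1+t)⁻¹ ≤ L by linarith) (show (0:ℝ) ≤ 1 + t by linarith)]
    have h2 : ξ k ^ α ≤ (1 + 1/α) * (1 + t) / k := by
      rw [le_div_iff₀ hk0]
      have e1 : ξ k ^ α * (c * k) * (1 + α) ≤ t * (1 + α) := by nlinarith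
      have e2 : ξ k ^ α * (c * k) * (1 + α) = (ξ k ^ α * k * α) * L := by
        rw [hcdef]; field_simp
      have e3 : (ξ k ^ α * k * α) * L ≤ ((1 + t) * (1 + α)) * L := by nlinarith
      have e4 : ξ k ^ α * (k:ℝ) * α ≤ (1 + t) * (1 + α) :=
        le_of_mul_le_mul_right (by linarith) hL
      have e5 : (1 + 1/α) * (1 + t) * α = (1 + t) * (1 + α) := by
        field_simp; ring
      have e6 : ξ k ^ α * (k:ℝ) * α ≤ (1 + 1/α) * (1 + t) * α := by
        rw [e5]; exact e4
      exact le_of_mul_le_mul_right e6 hα0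
    have h3 : (ξ k ^ α) ^ (α⁻¹) ≤ ((1 + 1/α) * (1 + t) / k) ^ (α⁻¹) :=
      Real.rpow_le_rpow hyk.le h2 (inv_nonneg.mpr hα0.le)
    rw [Real.rpow_rpow_inv (hpos k).le hα', ← one_div α] at h3
    exact h3
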